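/- Let σ be a partition of r with s(σ) parts and let 2 ≤ α ≤ s(σ) ≤ β. In the σ-hypergraph H(n,r,q|σ), the set of integers k for which there exists a k-(α,β)-colouring in which every class is monochromatic is exactly the interval [⌈(n - (s(σ)-1 - (α-1)·⌊(s(σ)-1)/(α-1)⌋)) / ⌊(s(σ)-1)/(α-1)⌋⌉, n]. -/

import Mathlib

open Finset

/-- `K` is an edge of the σ-hypergraph `H(n,r,q | σ)`: the multiset of non-zero
cardinalities of the intersections of `K` with the `n` classes equals `σ`. -/
def sigmaEdge (n q : ℕ) (σ : Multiset ℕ) (K : Finset (Fin n × Fin q)) : Prop :=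
  (((Finset.univ : Finset (Fin n)).val.map
      fun i => (K.filter fun v => v.1 = i).card).filter fun m => m ≠ 0) = σ

/-- `c` is an `(α,β)`-colouring: every edge contains at least `α` and at most `β` colours. -/
def isABColouring (n q : ℕ) (σ : Multiset ℕ) (α β : ℕ) (c : Fin n × Fin q → ℕ) : Prop :=
  ∀ K : Finset (Fin n × Fin q), sigmaEdge n q σ K →
    α ≤ (K.image c).card ∧ (K.image c).card ≤ β

/-- `c` uses exactly `k` colours. -/
def usesExactly (n q k : ℕ) (c : Fin n × Fin q → ℕ) : Prop :=
  ((Finset.univ : Finset (Fin n × Fin q)).image c).card = k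

/-- every class of the σ-hypergraph is monochromatic under `c`. -/
def classesMonochromatic (n q : ℕ) (c : Fin n × Fin q → ℕ) : Prop :=
  ∀ v w : Fin n × Fin q, v.1 = w.1 → c v = c w

/-- `σ` is a partition of `r` (a multiset of positive integers summing to `r`). -/
def IsPartitionOf (σ : Multiset ℕ) (r : ℕ) : Prop := σ.sum = r ∧ 0 ∉ σ

lemma image_fst_eq_filter {n q : ℕ} (K : Finset (Fin n × Fin q)) :
    K.image Prod.fst = univ.filter (fun i => (K.filter fun v => v.1 = i).card ≠ 0) := by
  ext i
  simp only [mem_image, mem_filter, mem_univ, true_and, Ne, card_eq_zero,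
    ← Finset.not_nonempty_iff_eq_empty, not_not, Finset.filter_nonempty_iff]


lemma edge_classes_card {n q : ℕ} {σ : Multiset ℕ} {K : Finset (Fin n × Fin q)}
    (h : sigmaEdge n q σ K) : (K.image Prod.fst).card = σ.card := by
  rw [image_fst_eq_filter]
  have := congrArg Multiset.card h
  rw [Multiset.filter_map] at this
  rw [← this, Multiset.card_map]
  rfl

lemma exists_edge {n q : ℕ} (σ : Multiset ℕ) (hpos : ∀ x ∈ σ, x ≠ 0) (hle : ∀ x ∈ σ, x ≤ q)
    (S : Finset (Fin n)) (hS : S.card = σ.card) :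
    ∃ K : Finset (Fin n × Fin q), sigmaEdge n q σ K ∧ K.image Prod.fst = S := by
  induction σ using Multiset.induction generalizing S with
  | empty =>
    refine ⟨∅, ?_, by simp [Finset.card_eq_zero.mp hS]⟩
    unfold sigmaEdge
    simp only [Finset.filter_empty, Finset.card_empty]
    refine Multiset.filter_eq_nil.mpr ?_
    intro m hm
    obtain ⟨x, -, rfl⟩ := Multiset.mem_map.mp hm
    simp
  | cons a σ' ih =>
    have ha0 : a ≠ 0 := hpos a (Multiset.mem_cons_self a σ')
    have haq : a ≤ q := hle a (Multiset.mem_cons_self a σ')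
    have hSne : S.Nonempty := by
      rw [← Finset.card_pos, hS, Multiset.card_cons]; omega
    obtain ⟨i₀, hi₀⟩ := hSne
    have hS' : (S.erase i₀).card = σ'.card := by
      rw [Finset.card_erase_of_mem hi₀, hS, Multiset.card_cons]; omega
    obtain ⟨K', hK', himg⟩ := ih (fun x hx => hpos x (Multiset.mem_cons_of_mem hx))
      (fun x hx => hle x (Multiset.mem_cons_of_mem hx)) (S.erase i₀) hS'
    set B : Finset (Fin q) := (Finset.range a).attachFin
      (fun m hm => lt_of_lt_of_le (Finset.mem_range.mp hm) haq) with hB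
    have hBcard : B.card = a := by rw [hB, Finset.card_attachFin, Finset.card_range]
    set E : Finset (Fin n × Fin q) := {i₀} ×ˢ B with hE
    have hEfst : ∀ v ∈ E, v.1 = i₀ := by
      intro v hv
      rw [hE, Finset.mem_product, Finset.mem_singleton] at hv
      exact hv.1
    have hK'i₀ : ∀ v ∈ K', v.1 ≠ i₀ := by
      intro v hv hvi
      have : v.1 ∈ K'.image Prod.fst := Finset.mem_image_of_mem _ hv
      rw [himg, hvi] at this
      exact (Finset.notMem_erase i₀ S) this
    -- key filter computations
    have hfilt_ne : ∀ i : Fin n, i ≠ i₀ →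
        ((K' ∪ E).filter fun v => v.1 = i) = (K'.filter fun v => v.1 = i) := by
      intro i hi
      rw [Finset.filter_union]
      have : (E.filter fun v => v.1 = i) = ∅ := by
        rw [Finset.filter_eq_empty_iff]
        intro v hv
        rw [hEfst v hv]
        exact fun h => hi h.symm
      rw [this, Finset.union_empty]
    have hfilt_i₀ : ((K' ∪ E).filter fun v => v.1 = i₀) = E := by
      rw [Finset.filter_union]
      have h1 : (K'.filter fun v => v.1 = i₀) = ∅ := by
        rw [Finset.filter_eq_empty_iff]
        exact hK'i₀
      have h2 : (E.filter fun v => v.1 = i₀) = E :=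
        Finset.filter_true_of_mem hEfst
      rw [h1, h2, Finset.empty_union]
    have hEcard : E.card = a := by
      rw [hE, Finset.card_product, Finset.card_singleton, one_mul, hBcard]
    refine ⟨K' ∪ E, ?_, ?_⟩
    · unfold sigmaEdge at hK' ⊢
      have huniv : (Finset.univ : Finset (Fin n)).val = i₀ ::ₘ (Finset.univ.val.erase i₀) :=
        (Multiset.cons_erase (Finset.mem_univ i₀ :)).symm
      have hmem_er : ∀ i ∈ (Finset.univ : Finset (Fin n)).val.erase i₀, i ≠ i₀ := by
        intro i hi
        exact ((Finset.univ.nodup.mem_erase_iff).mp hi).1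
      rw [huniv, Multiset.map_cons, hfilt_i₀, hEcard,
        Multiset.map_congr rfl (fun i hi => by rw [hfilt_ne i (hmem_er i hi)]),
        Multiset.filter_cons_of_pos (p := fun m => m ≠ 0) _ ha0]
      congr 1
      rw [huniv, Multiset.map_cons] at hK'
      have hz : (K'.filter fun v => v.1 = i₀).card = 0 := by
        rw [Finset.card_eq_zero, Finset.filter_eq_empty_iff]
        exact hK'i₀
      rw [hz, Multiset.filter_cons_of_neg _ (by simp)] at hK'
      exact hK'
    · rw [Finset.image_union, himg]
      have : E.image Prod.fst = {i₀} := by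
        apply Finset.Subset.antisymm
        · intro i hi
          obtain ⟨v, hv, rfl⟩ := Finset.mem_image.mp hi
          rw [hEfst v hv]; exact Finset.mem_singleton_self i₀
        · intro j hj
          rw [Finset.mem_singleton] at hj
          have hBne : B.Nonempty := by rw [← Finset.card_pos, hBcard]; omega
          obtain ⟨b, hb⟩ := hBne
          rw [hj]
          exact Finset.mem_image.mpr ⟨(i₀, b), by simp [hE, hb], rfl⟩
      rw [this]
      rw [Finset.union_comm, ← Finset.insert_eq, Finset.insert_erase hi₀]

lemma fwd {n s α : ℕ} (hα : 2 ≤ α) (hαs : α ≤ s) (hns : s ≤ n)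
    (d : Fin n → ℕ)
    (hcol : ∀ S : Finset (Fin n), S.card = s → α ≤ (S.image d).card) :
    n ≤ (univ.image d).card * ((s-1)/(α-1)) + ((s-1) - (α-1)*((s-1)/(α-1))) := by
  classical
  set t := (s-1)/(α-1) with ht
  set C := (univ.image d) with hC
  set k := C.card with hk
  have huniv_card : (univ : Finset (Fin n)).card = n := by simp
  have hkα : α ≤ k := by
    obtain ⟨S, -, hScard⟩ := Finset.exists_subset_card_eq
      (show s ≤ (univ : Finset (Fin n)).card by rw [huniv_card]; exact hns)
    exact le_trans (hcol S hScard)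
      (Finset.card_le_card (Finset.image_subset_image (Finset.subset_univ S)))
  have hP : ∃ C' ∈ C.powersetCard (α-1), ∀ X ∈ C.powersetCard (α-1),
      (∑ c ∈ X, (univ.filter (fun i => d i = c)).card)
        ≤ ∑ c ∈ C', (univ.filter (fun i => d i = c)).card := by
    apply Finset.exists_max_image
    obtain ⟨C', hsub, hcard⟩ := Finset.exists_subset_card_eq
      (show α - 1 ≤ k from le_trans (by omega) hkα)
    exact ⟨C', Finset.mem_powersetCard.mpr ⟨hsub, hcard⟩⟩
  obtain ⟨C', hC'P, hmax⟩ := hP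
  obtain ⟨hC'sub, hC'card⟩ := Finset.mem_powersetCard.mp hC'P
  have hUcard : (univ.filter (fun i => d i ∈ C')).card
      = ∑ c ∈ C', (univ.filter (fun i => d i = c)).card := by
    rw [Finset.card_eq_sum_card_fiberwise
      (fun i hi => (Finset.mem_filter.mp hi).2 : ∀ i ∈ univ.filter (fun i => d i ∈ C'), d i ∈ C')]
    apply Finset.sum_congr rfl
    intro c hc
    congr 1
    ext i
    simp only [Finset.mem_filter, Finset.mem_univ, true_and]
    constructor
    · rintro ⟨-, h⟩; exact h
    · intro h; exact ⟨h ▸ hc, h⟩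
  have hWs : ∑ c ∈ C', (univ.filter (fun i => d i = c)).card ≤ s - 1 := by
    by_contra hcon
    push_neg at hcon
    have hsle : s ≤ (univ.filter (fun i => d i ∈ C')).card := by omega
    obtain ⟨S, hSsub, hScard⟩ := Finset.exists_subset_card_eq hsle
    have him : S.image d ⊆ C' := by
      intro c hc
      obtain ⟨i, hi, rfl⟩ := Finset.mem_image.mp hc
      exact (Finset.mem_filter.mp (hSsub hi)).2
    have h1 := hcol S hScard
    have h2 := Finset.card_le_card him
    omega
  have hC'ne : C'.Nonempty := by rw [← Finset.card_pos, hC'card]; omega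
  obtain ⟨c₀, hc₀, hminc⟩ :=
    Finset.exists_min_image C' (fun c => (univ.filter (fun i => d i = c)).card) hC'ne
  have hc₀t : (univ.filter (fun i => d i = c₀)).card ≤ t := by
    have h1 : C'.card • (univ.filter (fun i => d i = c₀)).card
        ≤ ∑ c ∈ C', (univ.filter (fun i => d i = c)).card :=
      Finset.card_nsmul_le_sum _ _ _ hminc
    rw [hC'card, smul_eq_mul] at h1
    rw [ht, Nat.le_div_iff_mul_le (show 0 < α - 1 by omega)]
    calc (univ.filter (fun i => d i = c₀)).card * (α-1)
        = (α-1) * (univ.filter (fun i => d i = c₀)).card := Nat.mul_comm _ _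
      _ ≤ s - 1 := le_trans h1 hWs
  have hswap : ∀ c' ∈ C \ C',
      (univ.filter (fun i => d i = c')).card ≤ (univ.filter (fun i => d i = c₀)).card := by
    intro c' hc'
    obtain ⟨hc'C, hc'nC'⟩ := Finset.mem_sdiff.mp hc'
    have hc'er : c' ∉ C'.erase c₀ := fun h => hc'nC' (Finset.mem_of_mem_erase h)
    have hC''card : (insert c' (C'.erase c₀)).card = α - 1 := by
      rw [Finset.card_insert_of_notMem hc'er, Finset.card_erase_of_mem hc₀, hC'card]
      omega
    have hC''sub : insert c' (C'.erase c₀) ⊆ C := by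
      intro x hx
      rcases Finset.mem_insert.mp hx with rfl | hx
      · exact hc'C
      · exact hC'sub (Finset.mem_of_mem_erase hx)
    have hle := hmax _ (Finset.mem_powersetCard.mpr ⟨hC''sub, hC''card⟩)
    rw [Finset.sum_insert hc'er] at hle
    have herase := Finset.sum_erase_add C' (fun c => (univ.filter (fun i => d i = c)).card) hc₀
    omega
  have htotal : (univ : Finset (Fin n)).card = ∑ c ∈ C, (univ.filter (fun i => d i = c)).card :=
    Finset.card_eq_sum_card_fiberwise
      (fun i _ => Finset.mem_image_of_mem d (Finset.mem_univ i))
  rw [huniv_card] at htotal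
  have hsplit : ∑ c ∈ C \ C', (univ.filter (fun i => d i = c)).card
      + ∑ c ∈ C', (univ.filter (fun i => d i = c)).card
      = ∑ c ∈ C, (univ.filter (fun i => d i = c)).card := Finset.sum_sdiff hC'sub
  have hbound : ∑ c ∈ C \ C', (univ.filter (fun i => d i = c)).card ≤ (C \ C').card * t := by
    calc ∑ c ∈ C \ C', (univ.filter (fun i => d i = c)).card
        ≤ (C \ C').card • t :=
          Finset.sum_le_card_nsmul _ _ _ (fun c hc => le_trans (hswap c hc) hc₀t)
      _ = (C \ C').card * t := by rw [smul_eq_mul]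
  have hsd : (C \ C').card = k - (α-1) := by rw [Finset.card_sdiff_of_subset hC'sub, hC'card]
  have hts : (α-1) * t ≤ s - 1 := by
    calc (α-1) * t = t * (α-1) := Nat.mul_comm _ _
      _ ≤ s - 1 := Nat.div_mul_le_self _ _
  rw [hsd] at hbound
  have hsubmul : (k - (α-1)) * t = k*t - (α-1)*t := Nat.sub_mul _ _ _
  have hYX : (α-1)*t ≤ k*t := Nat.mul_le_mul_right t (by omega)
  omega

lemma bwd {n s α k : ℕ} (hα : 2 ≤ α) (hαs : α ≤ s) (hns : s ≤ n) (hkn : k ≤ n)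
    (hnk : n ≤ k * ((s-1)/(α-1)) + ((s-1) - (α-1)*((s-1)/(α-1)))) :
    ((univ.image (fun i : Fin n => (i : ℕ) % k)).card = k) ∧
    ∀ S : Finset (Fin n), S.card = s → α ≤ (S.image (fun i : Fin n => (i : ℕ) % k)).card := by
  classical
  set t := (s-1)/(α-1) with ht
  have hts : (α-1) * t ≤ s - 1 := by
    calc (α-1) * t = t * (α-1) := Nat.mul_comm _ _
      _ ≤ s - 1 := Nat.div_mul_le_self _ _
  have ht1 : 1 ≤ t := by
    rw [ht, Nat.le_div_iff_mul_le (show 0 < α - 1 by omega)]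
    omega
  have hρ : s - 1 - (α-1)*t < α - 1 := by
    have h1 := Nat.div_add_mod (s-1) (α-1)
    have h2 : (s-1) % (α-1) < α - 1 := Nat.mod_lt _ (by omega)
    have h3 : (α-1) * ((s-1)/(α-1)) = (α-1) * t := by rw [ht]
    omega
  have hkα : α ≤ k := by
    by_contra hcon
    push_neg at hcon
    have h := Nat.mul_le_mul_right t (show k ≤ α-1 by omega)
    omega
  have hk0 : 0 < k := by omega
  constructor
  · have himg : univ.image (fun i : Fin n => (i : ℕ) % k) = range k := by
      apply Finset.Subset.antisymm
      · intro c hc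
        obtain ⟨i, -, rfl⟩ := Finset.mem_image.mp hc
        exact Finset.mem_range.mpr (Nat.mod_lt _ hk0)
      · intro c hc
        rw [Finset.mem_range] at hc
        exact Finset.mem_image.mpr ⟨⟨c, lt_of_lt_of_le hc hkn⟩, Finset.mem_univ _,
          by simp [Nat.mod_eq_of_lt hc]⟩
    rw [himg, Finset.card_range]
  · intro S hS
    by_contra hcon
    push_neg at hcon
    set C := S.image (fun i : Fin n => (i : ℕ) % k) with hCdef
    have hmα : C.card ≤ α - 1 := by omega
    have hSA : S ⊆ univ.filter (fun i : Fin n => (i : ℕ) % k ∈ C) := by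
      intro i hi
      exact Finset.mem_filter.mpr ⟨Finset.mem_univ _, Finset.mem_image_of_mem _ hi⟩
    have hsA : s ≤ (univ.filter (fun i : Fin n => (i : ℕ) % k ∈ C)).card := by
      rw [← hS]; exact Finset.card_le_card hSA
    set A₁ := univ.filter (fun i : Fin n => (i : ℕ) % k ∈ C ∧ (i : ℕ) / k < n / k) with hA₁
    set A₂ := univ.filter (fun i : Fin n => (i : ℕ) % k ∈ C ∧ (i : ℕ) / k = n / k) with hA₂
    have hAsub : univ.filter (fun i : Fin n => (i : ℕ) % k ∈ C) ⊆ A₁ ∪ A₂ := by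
      intro i hi
      obtain ⟨-, hiC⟩ := Finset.mem_filter.mp hi
      have hle : (i : ℕ) / k ≤ n / k := Nat.div_le_div_right (le_of_lt i.isLt)
      rcases lt_or_eq_of_le hle with h | h
      · exact Finset.mem_union_left _ (Finset.mem_filter.mpr ⟨Finset.mem_univ _, hiC, h⟩)
      · exact Finset.mem_union_right _ (Finset.mem_filter.mpr ⟨Finset.mem_univ _, hiC, h⟩)
    have hA1 : A₁.card ≤ C.card * (n / k) := by
      have := Finset.card_le_card_of_injOn (fun i : Fin n => ((i : ℕ) % k, (i : ℕ) / k))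
        (s := A₁) (t := C ×ˢ range (n / k))
        (fun i hi => by
          obtain ⟨-, h1, h2⟩ := Finset.mem_filter.mp hi
          exact Finset.mem_product.mpr ⟨h1, Finset.mem_range.mpr h2⟩)
        (fun i _ j _ hij => by
          simp only [Prod.mk.injEq] at hij
          have e1 := Nat.div_add_mod (i : ℕ) k
          have e2 := Nat.div_add_mod (j : ℕ) k
          rw [hij.1, hij.2] at e1
          exact Fin.ext (by omega))
      rwa [Finset.card_product, Finset.card_range] at this
    have hA2 : A₂.card ≤ (C ∩ range (n % k)).card := by
      apply Finset.card_le_card_of_injOn (fun i : Fin n => (i : ℕ) % k)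
      · intro i hi
        obtain ⟨-, h1, h2⟩ := Finset.mem_filter.mp hi
        refine Finset.mem_inter.mpr ⟨h1, Finset.mem_range.mpr ?_⟩
        have e1 := Nat.div_add_mod (i : ℕ) k
        have e2 := Nat.div_add_mod n k
        rw [h2] at e1
        have := i.isLt
        show (i : ℕ) % k < n % k
        omega
      · intro i hi j hj hij
        obtain ⟨-, -, h2⟩ := Finset.mem_filter.mp hi
        obtain ⟨-, -, h2'⟩ := Finset.mem_filter.mp hj
        simp only at hij
        have e1 := Nat.div_add_mod (i : ℕ) k
        have e2 := Nat.div_add_mod (j : ℕ) k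
        rw [h2] at e1
        rw [h2'] at e2
        exact Fin.ext (by omega)
    have hcard : (univ.filter (fun i : Fin n => (i : ℕ) % k ∈ C)).card ≤ A₁.card + A₂.card :=
      le_trans (Finset.card_le_card hAsub) (Finset.card_union_le _ _)
    have hE1 : (C ∩ range (n % k)).card ≤ n % k :=
      le_trans (Finset.card_le_card Finset.inter_subset_right) (le_of_eq (Finset.card_range _))
    have hE2 : (C ∩ range (n % k)).card ≤ C.card :=
      Finset.card_le_card Finset.inter_subset_left
    have hCa : C.card * (n / k) ≤ (α-1) * (n / k) := Nat.mul_le_mul_right _ hmα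
    have hdivle : n / k ≤ t := by
      rw [Nat.div_le_iff_le_mul_add_pred hk0]
      have : k * t = t * k := Nat.mul_comm _ _
      omega
    rcases Nat.lt_or_ge (n / k) t with hu | hu
    · have key : (α-1) * (n / k) + (α-1) ≤ (α-1) * t := by
        have h1 : (α-1) * ((n / k) + 1) ≤ (α-1) * t := Nat.mul_le_mul_left _ (by omega)
        have h2 : (α-1) * ((n / k) + 1) = (α-1) * (n / k) + (α-1) := by ring
        omega
      omega
    · have hu' : n / k = t := le_antisymm hdivle hu
      have e2 := Nat.div_add_mod n k
      rw [hu'] at e2 hCa hA1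
      omega

theorem stmt3 (n r q α β Δ : ℕ) (σ : Multiset ℕ)
    (hpart : IsPartitionOf σ r)
    (hΔmem : Δ ∈ σ) (hΔmax : ∀ x ∈ σ, x ≤ Δ)
    (hα : 2 ≤ α) (hαs : α ≤ σ.card) (hsβ : σ.card ≤ β)
    (hq : Δ ≤ q) (hn : σ.card ≤ n) :
    ∀ k : ℕ,
      (∃ c : Fin n × Fin q → ℕ, classesMonochromatic n q c ∧
          isABColouring n q σ α β c ∧ usesExactly n q k c) ↔
        ((n - (σ.card - 1 - (α - 1) * ((σ.card - 1) / (α - 1)))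
              + ((σ.card - 1) / (α - 1)) - 1) / ((σ.card - 1) / (α - 1)) ≤ k ∧ k ≤ n) := by
  classical
  intro k
  obtain ⟨hsum, hzero⟩ := hpart
  set s := σ.card with hs
  set t := (s-1)/(α-1) with ht
  have hΔ0 : Δ ≠ 0 := fun h => hzero (h ▸ hΔmem)
  have hq0 : 0 < q := by omega
  have hts : (α-1) * t ≤ s - 1 := by
    calc (α-1) * t = t * (α-1) := Nat.mul_comm _ _
      _ ≤ s - 1 := Nat.div_mul_le_self _ _
  have ht1 : 1 ≤ t := by
    rw [ht, Nat.le_div_iff_mul_le (show 0 < α - 1 by omega)]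
    omega
  have hiff : ((n - (s - 1 - (α-1)*t) + t - 1) / t ≤ k ↔ n ≤ k*t + (s-1-(α-1)*t)) := by
    rw [Nat.div_le_iff_le_mul_add_pred (show 0 < t by omega)]
    have hcomm : t*k = k*t := Nat.mul_comm _ _
    omega
  constructor
  · rintro ⟨c, hmono, hAB, huse⟩
    have hd : ∀ v : Fin n × Fin q, c v = c (v.1, ⟨0, hq0⟩) :=
      fun v => hmono v (v.1, ⟨0, hq0⟩) rfl
    set d : Fin n → ℕ := fun i => c (i, ⟨0, hq0⟩) with hdd
    have himeq : (univ : Finset (Fin n × Fin q)).image c = (univ : Finset (Fin n)).image d := by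
      apply Finset.Subset.antisymm
      · intro x hx
        obtain ⟨v, -, rfl⟩ := Finset.mem_image.mp hx
        rw [hd v]
        exact Finset.mem_image_of_mem d (Finset.mem_univ v.1)
      · intro x hx
        obtain ⟨i, -, rfl⟩ := Finset.mem_image.mp hx
        exact Finset.mem_image_of_mem c (Finset.mem_univ (i, (⟨0, hq0⟩ : Fin q)))
    have hkd : (univ.image d).card = k := by
      rw [← himeq]
      exact huse
    have hcol : ∀ S : Finset (Fin n), S.card = s → α ≤ (S.image d).card := by
      intro S hS
      obtain ⟨K, hK, hKimg⟩ := exists_edge σ (fun x hx h0 => hzero (h0 ▸ hx))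
        (fun x hx => le_trans (hΔmax x hx) hq) S (by rw [hS])
      have h1 := (hAB K hK).1
      have h2 : K.image c = S.image d := by
        rw [← hKimg, Finset.image_image]
        apply Finset.image_congr
        intro v hv
        exact hd v
      rwa [h2] at h1
    refine ⟨hiff.mpr ?_, ?_⟩
    · have := fwd hα hαs hn d hcol
      rwa [hkd] at this
    · rw [← hkd]
      exact le_trans Finset.card_image_le (by simp)
  · rintro ⟨hk1, hk2⟩
    have hnk : n ≤ k*t + (s-1-(α-1)*t) := hiff.mp hk1
    obtain ⟨hcardk, hcol⟩ := bwd hα hαs hn hk2 hnk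
    refine ⟨fun v => (v.1 : ℕ) % k, fun v w h => by simp only []; rw [h], ?_, ?_⟩
    · intro K hK
      have hScard : (K.image Prod.fst).card = s := edge_classes_card hK
      have h2 : K.image (fun v : Fin n × Fin q => (v.1 : ℕ) % k)
          = (K.image Prod.fst).image (fun i : Fin n => (i : ℕ) % k) := by
        rw [Finset.image_image]
        rfl
      constructor
      · rw [h2]
        exact hcol _ hScard
      · rw [h2]
        calc ((K.image Prod.fst).image (fun i : Fin n => (i : ℕ) % k)).card
            ≤ (K.image Prod.fst).card := Finset.card_image_le
          _ = s := hScard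
          _ ≤ β := hsβ
    · unfold usesExactly
      have himeq : (univ : Finset (Fin n × Fin q)).image (fun v => (v.1 : ℕ) % k)
          = (univ : Finset (Fin n)).image (fun i : Fin n => (i : ℕ) % k) := by
        apply Finset.Subset.antisymm
        · intro x hx
          obtain ⟨v, -, rfl⟩ := Finset.mem_image.mp hx
          exact Finset.mem_image_of_mem _ (Finset.mem_univ v.1)
        · intro x hx
          obtain ⟨i, -, rfl⟩ := Finset.mem_image.mp hx
          exact Finset.mem_image_of_mem (fun v : Fin n × Fin q => (v.1 : ℕ) % k)
            (Finset.mem_univ (i, ⟨0, hq0⟩))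
      rw [himeq, hcardk]
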